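/- arXiv:1706.06663 — 2 statements merged into one kernel-verified Lean document; each statement's English description precedes it below -/
import Mathlib

section
/- Let g : 2^ℕ → ℕ have modulus of uniform continuity N (if f, h agree on the first N values then g(f) = g(h)), let k = max_{|σ|=N, σ binary} g(σ*0...), and let T be a set of finite binary strings closed under initial segments. If for every binary string τ of length k the infinite sequence τ*0... satisfies (τ*0...) restricted to g(τ*0...) ∉ T, then for every β ∈ 2^ℕ there exists i ≤ k with the initial segment of β of length i not in T. -/
def ext {N : ℕ} (σ : Fin N → Bool) : ℕ → Bool :=
  fun m => if h : m < N then σ ⟨m, h⟩ else false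

/-- Initial segment of length n of an infinite binary sequence. -/
def seg (β : ℕ → Bool) (n : ℕ) : List Bool := List.ofFn fun i : Fin n => β i

/-- Correctness of the special fan functional built from the intuitionistic
fan functional. -/
theorem special_fan_from_MUC (g : (ℕ → Bool) → ℕ) (N : ℕ)
    (hN : ∀ f h : ℕ → Bool, (∀ m < N, f m = h m) → g f = g h)
    (T : Set (List Bool))
    (hT : ∀ s t : List Bool, s <+: t → t ∈ T → s ∈ T)
    (k : ℕ) (hk : k = Finset.univ.sup (fun σ : Fin N → Bool => g (ext σ)))
    (hcov : ∀ τ : Fin k → Bool, seg (ext τ) (g (ext τ)) ∉ T) :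
    ∀ β : ℕ → Bool, ∃ i ≤ k, seg β i ∉ T := by
  intro β
  set τ : Fin k → Bool := fun i => β i with hτ
  set σ : Fin N → Bool := fun i => ext τ i with hσ
  have hg : g (ext τ) = g (ext σ) := by
    apply hN
    intro m hm
    simp [ext, hm, hσ]
  have hle : g (ext τ) ≤ k := by
    rw [hg, hk]
    exact Finset.le_sup (f := fun σ : Fin N → Bool => g (ext σ)) (Finset.mem_univ σ)
  refine ⟨g (ext τ), hle, ?_⟩
  have hseg : seg β (g (ext τ)) = seg (ext τ) (g (ext τ)) := by
    unfold seg
    congr 1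
    funext i
    have : (i : ℕ) < k := lt_of_lt_of_le i.isLt hle
    simp [ext, this, hτ]
  rw [hseg]
  exact hcov τ
end

section
/- Suppose Φ assigns to each binary tree T of positive measure an infinite path Φ(T) through T. Then Φ is not continuous (with respect to the product topology, coding trees as elements of 2^{binary strings}): for every N there exist binary trees T₀, T₁ of measure 1/2 agreeing on all strings of length ≤ N such that Φ(T₀)(0) ≠ Φ(T₁)(0). -/
open Filter

noncomputable def cnt (T : Set (List Bool)) (n : ℕ) : ℕ :=
  Nat.card {σ : List Bool // σ ∈ T ∧ σ.length = n}

def IsBinTree (T : Set (List Bool)) : Prop :=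
  ∀ s t : List Bool, s <+: t → t ∈ T → s ∈ T

def PosMeasure (T : Set (List Bool)) : Prop :=
  ∃ k : ℕ, 0 < k ∧ ∀ n, (1:ℝ) / k ≤ (cnt T n : ℝ) / 2 ^ n

def myT (b : Bool) (N : ℕ) : Set (List Bool) :=
  {σ | σ.length ≤ N ∨ σ.head? = some b}

lemma myT_tree (b : Bool) (N : ℕ) : IsBinTree (myT b N) := by
  rintro s t ⟨r, rfl⟩ (h | h)
  · left
    have : s.length ≤ (s ++ r).length := by simp
    omega
  · rcases eq_or_ne s [] with rfl | hs
    · left; simp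
    · right; rwa [List.head?_append_of_ne_nil _ hs] at h

lemma card_len (n : ℕ) : Nat.card {σ : List Bool // σ.length = n} = 2 ^ n := by
  calc Nat.card {σ : List Bool // σ.length = n}
      = Nat.card (Fin n → Bool) := Nat.card_congr (Equiv.vectorEquivFin Bool n)
    _ = 2 ^ n := by rw [Nat.card_eq_fintype_card, Fintype.card_fun]; simp

lemma cnt_le (b : Bool) (N n : ℕ) (h : n ≤ N) : cnt (myT b N) n = 2 ^ n := by
  rw [cnt, ← card_len n]
  apply Nat.card_congr
  apply Equiv.subtypeEquivRight
  intro σ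
  constructor
  · exact fun h => h.2
  · intro hl; exact ⟨Or.inl (hl ▸ h), hl⟩

lemma cnt_gt (b : Bool) (N m : ℕ) (h : N < m + 1) :
    cnt (myT b N) (m + 1) = 2 ^ m := by
  rw [cnt, ← card_len m]
  apply Nat.card_congr
  refine
    { toFun := fun σ => ⟨σ.1.tail, ?_⟩
      invFun := fun τ => ⟨b :: τ.1, Or.inr rfl, by simp [τ.2]⟩
      left_inv := ?_
      right_inv := fun τ => by simp }
  · rcases σ with ⟨σ, hσ, hl⟩
    simp [List.length_tail, hl]
  · rintro ⟨σ, hσ, hl⟩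
    rcases σ with _ | ⟨a, σ⟩
    · simp at hl
    · rcases hσ with hσ | hσ
      · simp at hσ hl; omega
      · simp at hσ
        subst hσ
        rfl

lemma cnt_tendsto (b : Bool) (N : ℕ) :
    Tendsto (fun n => (cnt (myT b N) n : ℝ) / 2 ^ n) atTop (nhds (1/2)) := by
  apply Tendsto.congr' _ tendsto_const_nhds
  filter_upwards [eventually_ge_atTop (N + 1)] with n hn
  obtain ⟨m, rfl⟩ : ∃ m, n = m + 1 := ⟨n - 1, by omega⟩
  rw [cnt_gt b N m (by omega)]
  rw [pow_succ]
  push_cast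
  rw [div_eq_div_iff (by positivity) (by positivity)]
  ring

lemma myT_pos (b : Bool) (N : ℕ) : PosMeasure (myT b N) := by
  refine ⟨2, by norm_num, fun n => ?_⟩
  rcases le_or_gt n N with h | h
  · rw [cnt_le b N n h]
    rw [div_le_div_iff₀ (by norm_num) (by positivity)]
    push_cast
    nlinarith [pow_pos (show (0:ℝ) < 2 by norm_num) n]
  · obtain ⟨m, rfl⟩ : ∃ m, n = m + 1 := ⟨n - 1, by omega⟩
    rw [cnt_gt b N m h, pow_succ]
    push_cast
    rw [div_le_div_iff₀ (by norm_num) (by positivity)]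
    nlinarith [pow_pos (show (0:ℝ) < 2 by norm_num) m]

lemma head_eq (Φ : Set (List Bool) → (ℕ → Bool))
    (hΦ : ∀ T, IsBinTree T → PosMeasure T → ∀ n, seg (Φ T) n ∈ T)
    (b : Bool) (N : ℕ) : Φ (myT b N) 0 = b := by
  have h := hΦ (myT b N) (myT_tree b N) (myT_pos b N) (N + 1)
  rcases h with h | h
  · simp [seg] at h
  · rw [seg] at h
    have : (List.ofFn fun i : Fin (N+1) => Φ (myT b N) i).head? = some (Φ (myT b N) 0) := by
      rw [List.ofFn_succ]
      rfl
    rw [this] at h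
    exact Option.some_injective _ h

/-- Any functional selecting paths through positive-measure binary trees is
discontinuous. -/
theorem uniform_WWKL_discontinuous (Φ : Set (List Bool) → (ℕ → Bool))
    (hΦ : ∀ T, IsBinTree T → PosMeasure T → ∀ n, seg (Φ T) n ∈ T) :
    ∀ N : ℕ, ∃ T₀ T₁ : Set (List Bool),
      IsBinTree T₀ ∧ IsBinTree T₁ ∧
      Tendsto (fun n => (cnt T₀ n : ℝ) / 2 ^ n) atTop (nhds (1/2)) ∧
      Tendsto (fun n => (cnt T₁ n : ℝ) / 2 ^ n) atTop (nhds (1/2)) ∧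
      (∀ σ : List Bool, σ.length ≤ N → (σ ∈ T₀ ↔ σ ∈ T₁)) ∧
      Φ T₀ 0 ≠ Φ T₁ 0 := by
  intro N
  refine ⟨myT false N, myT true N, myT_tree _ _, myT_tree _ _,
    cnt_tendsto _ _, cnt_tendsto _ _, fun σ hσ => ?_, ?_⟩
  · simp [myT, hσ]
  · rw [head_eq Φ hΦ false N, head_eq Φ hΦ true N]
    simp
end
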